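/- Very strong extractors yield deterministic entropy condensers: if δ ∈ [0,1] and g : {0,1}^n × [D] → {0,1}^m is a very strong δ-extractor for a family F, then for every μ ∈ F, H(g(X,1),…,g(X,D)) ≥ D·m − D·m·δ − D·sqrt(4·log₂e·m·δ) for X ∼ μ; i.e., x ↦ (g(x,1),…,g(x,D)) is an entropy condenser of entropy rate at least 1 − δ − sqrt(4·log₂e·δ/m). -/
import Mathlib


open Finset

/-- `μ` is a probability distribution on the finite type `A`. -/
def IsDist {A : Type*} [Fintype A] (μ : A → ℝ) : Prop :=
  (∀ a, 0 ≤ μ a) ∧ ∑ a, μ a = 1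

open Classical in
/-- Probability of an event under a distribution on a finite type. -/
noncomputable def Pr {A : Type*} [Fintype A] (μ : A → ℝ) (p : A → Prop) : ℝ :=
  ∑ a, if p a then μ a else 0

/-- Base-2 Shannon entropy of the push-forward of `μ` under `f`. -/
noncomputable def pushH {Ω β : Type*} [Fintype Ω] [Fintype β]
    (μ : Ω → ℝ) (f : Ω → β) : ℝ :=
  ∑ b, Pr μ (fun x => f x = b) * Real.logb 2 (Pr μ (fun x => f x = b))⁻¹

/-- The "very strong extractor" error of `g : Ω × [D] → {0,1}^r` on `μ`:
`E_{T uniform, Z∼μ} ‖ν^μ_{T, g(Z,1),…,g(Z,T−1)} − U‖₁`, where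
`ν^μ_{s,y₁,…,y_{s−1}}` is the conditional distribution of `g(X,s)` given
`g(X,t) = y_t` for all `t < s`. -/
noncomputable def vsErr {Ω : Type*} [Fintype Ω] {D r : ℕ}
    (μ : Ω → ℝ) (g : Ω → Fin D → (Fin r → Bool)) : ℝ :=
  (D : ℝ)⁻¹ * ∑ s : Fin D, ∑ z, μ z *
    ∑ y : Fin r → Bool,
      |Pr μ (fun x => g x s = y ∧ ∀ t, t < s → g x t = g z t)
          / Pr μ (fun x => ∀ t, t < s → g x t = g z t)
        - ((2 : ℝ) ^ r)⁻¹|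



lemma psi_mono {u t : ℝ} (hu : 0 < u) (hut : u ≤ t) (ht : t ≤ 1) :
    t * Real.log t - t ≤ u * Real.log u - u := by
  have hanti : AntitoneOn (fun x : ℝ => x * Real.log x - x) (Set.Icc u 1) := by
    apply antitoneOn_of_deriv_nonpos (convex_Icc u 1)
    · apply ContinuousOn.sub ?_ continuousOn_id
      apply ContinuousOn.mul continuousOn_id
      apply Real.continuousOn_log.mono
      intro x hx
      simp only [Set.mem_Icc] at hx
      simp only [Set.mem_compl_iff, Set.mem_singleton_iff]
      intro h
      rw [h] at hx
      linarith [hx.1]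
    · intro x hx
      rw [interior_Icc] at hx
      have hx0 : x ≠ 0 := by have := hx.1; intro h; rw [h] at this; linarith
      exact ((Real.hasDerivAt_mul_log hx0).sub (hasDerivAt_id x)).differentiableAt.differentiableWithinAt
    · intro x hx
      rw [interior_Icc] at hx
      have hx0 : x ≠ 0 := by have := hx.1; intro h; rw [h] at this; linarith
      have hd : HasDerivAt (fun x : ℝ => x * Real.log x - x) (Real.log x + 1 - 1) x :=
        (Real.hasDerivAt_mul_log hx0).sub (hasDerivAt_id x)
      rw [hd.deriv]
      have : Real.log x ≤ 0 := Real.log_nonpos (by linarith [hx.1]) (le_of_lt hx.2)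
      linarith
  exact hanti ⟨le_refl u, le_trans hut ht⟩ ⟨hut, ht⟩ hut

lemma core_pt (m : ℕ) {t : ℝ} (ht0 : 0 ≤ t) (ht1 : t ≤ 1) :
    t * ((m : ℝ) + Real.logb 2 t)
      ≤ ((m : ℝ) + Real.logb 2 (Real.exp 1)) * max (t - ((2:ℝ)^m)⁻¹) 0 := by
  set u : ℝ := ((2:ℝ)^m)⁻¹ with hudef
  have h2m : (0:ℝ) < 2 ^ m := by positivity
  have hu : 0 < u := by positivity
  have hL : (0:ℝ) < Real.log 2 := Real.log_pos (by norm_num)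
  have hlogbe : Real.logb 2 (Real.exp 1) = (Real.log 2)⁻¹ := by
    rw [Real.logb, Real.log_exp, inv_eq_one_div]
  rcases le_or_gt t u with h | h
  · rw [max_eq_right (by linarith), mul_zero]
    rcases eq_or_lt_of_le ht0 with h0 | h0
    · rw [← h0]; norm_num
    · have hexp : (m : ℝ) + Real.logb 2 t = Real.logb 2 (t * 2 ^ m) := by
        rw [Real.logb_mul (ne_of_gt h0) (ne_of_gt h2m), Real.logb_pow,
          Real.logb_self_eq_one (by norm_num : (1:ℝ) < 2)]
        ring
      rw [hexp]
      have ht2m : t * 2 ^ m ≤ 1 := by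
        calc t * 2 ^ m ≤ u * 2 ^ m := by nlinarith
        _ = 1 := inv_mul_cancel₀ (ne_of_gt h2m)
      exact mul_nonpos_of_nonneg_of_nonpos ht0
        (Real.logb_nonpos (by norm_num) (by positivity) ht2m)
  · rw [max_eq_left (by linarith)]
    have hlogu : Real.log u = -((m:ℝ) * Real.log 2) := by
      rw [hudef, Real.log_inv, Real.log_pow]
    have key : t * Real.log t - t ≤ u * Real.log u - u := psi_mono hu h.le ht1
    have hiden : ((m:ℝ) + (Real.log 2)⁻¹) * (t - u) - t * ((m:ℝ) + Real.log t / Real.log 2)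
        = ((u * Real.log u - u) - (t * Real.log t - t)) / Real.log 2 := by
      rw [hlogu]; field_simp; ring
    rw [hlogbe, Real.logb]
    have hnn : 0 ≤ ((u * Real.log u - u) - (t * Real.log t - t)) / Real.log 2 :=
      div_nonneg (by linarith) hL.le
    linarith [hiden ▸ hnn]


lemma core_dist {γ : Type*} [Fintype γ] (m : ℕ) (hcard : Fintype.card γ = 2 ^ m)
    (ν : γ → ℝ) (h0 : ∀ c, 0 ≤ ν c) (h1 : ∑ c, ν c = 1) :
    (m : ℝ) - ((m : ℝ) + Real.logb 2 (Real.exp 1)) / 2 * ∑ c, |ν c - ((2:ℝ)^m)⁻¹|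
      ≤ ∑ c, ν c * Real.logb 2 (ν c)⁻¹ := by
  set u : ℝ := ((2:ℝ)^m)⁻¹ with hudef
  have h2m : (0:ℝ) < 2 ^ m := by positivity
  have hsum_u : ∑ _c : γ, u = 1 := by
    rw [Finset.sum_const, nsmul_eq_mul]
    simp only [Finset.card_univ, hcard]
    push_cast
    exact mul_inv_cancel₀ (ne_of_gt h2m)
  have habs : ∑ c, |ν c - u| = 2 * ∑ c, max (ν c - u) 0 := by
    have hpt : ∀ x : ℝ, |x| = 2 * max x 0 - x := by
      intro x
      rcases le_or_gt 0 x with h | h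
      · rw [abs_of_nonneg h, max_eq_left h]; ring
      · rw [abs_of_neg h, max_eq_right h.le]; ring
    calc ∑ c, |ν c - u| = ∑ c, (2 * max (ν c - u) 0 - (ν c - u)) :=
          Finset.sum_congr rfl fun c _ => hpt _
      _ = 2 * ∑ c, max (ν c - u) 0 - (∑ c, ν c - ∑ _c : γ, u) := by
          rw [Finset.sum_sub_distrib, Finset.mul_sum, Finset.sum_sub_distrib]
      _ = 2 * ∑ c, max (ν c - u) 0 := by rw [h1, hsum_u]; ring
  have hle1 : ∀ c, ν c ≤ 1 := by
    intro c
    have := Finset.single_le_sum (f := ν) (fun i _ => h0 i) (Finset.mem_univ c)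
    linarith [h1 ▸ this]
  have key : ∑ c, ν c * ((m:ℝ) + Real.logb 2 (ν c))
      ≤ ((m:ℝ) + Real.logb 2 (Real.exp 1)) * ∑ c, max (ν c - u) 0 := by
    rw [Finset.mul_sum]
    exact Finset.sum_le_sum fun c _ => core_pt m (h0 c) (hle1 c)
  have expand : ∑ c, ν c * ((m:ℝ) + Real.logb 2 (ν c))
      = (m : ℝ) - ∑ c, ν c * Real.logb 2 (ν c)⁻¹ := by
    have : ∀ c, ν c * ((m:ℝ) + Real.logb 2 (ν c))
        = ν c * (m:ℝ) - ν c * Real.logb 2 (ν c)⁻¹ := by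
      intro c; rw [Real.logb_inv]; ring
    rw [Finset.sum_congr rfl fun c _ => this c, Finset.sum_sub_distrib,
      ← Finset.sum_mul, h1, one_mul]
  rw [habs]
  have key2 : (m : ℝ) - ∑ c, ν c * Real.logb 2 (ν c)⁻¹
      ≤ ((m:ℝ) + Real.logb 2 (Real.exp 1)) * ∑ c, max (ν c - u) 0 := expand ▸ key
  linarith [key2]

lemma per_prefix {γ : Type*} [Fintype γ] (m : ℕ) (hcard : Fintype.card γ = 2 ^ m)
    (J : γ → ℝ) (hJ : ∀ c, 0 ≤ J c) :
    (∑ c, J c) * m - ((m : ℝ) + Real.logb 2 (Real.exp 1)) / 2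
        * ((∑ c, J c) * ∑ c, |J c / (∑ c', J c') - ((2:ℝ)^m)⁻¹|)
      ≤ ∑ c, J c * Real.logb 2 ((∑ c', J c') / J c) := by
  set P : ℝ := ∑ c, J c with hP
  have hP0 : 0 ≤ P := Finset.sum_nonneg fun c _ => hJ c
  rcases eq_or_lt_of_le hP0 with h0 | h0
  · -- P = 0, so all J c = 0
    have hJ0 : ∀ c ∈ Finset.univ, J c = 0 :=
      fun c _ => le_antisymm (by
        have := (Finset.sum_eq_zero_iff_of_nonneg (fun i _ => hJ i)).mp h0.symm
        exact le_of_eq (this c (Finset.mem_univ c))) (hJ c)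
    have : ∀ c ∈ Finset.univ, J c * Real.logb 2 (P / J c) = 0 := by
      intro c hc; rw [hJ0 c hc]; ring
    rw [Finset.sum_congr rfl this, Finset.sum_const, ← h0]
    simp
  · set ν : γ → ℝ := fun c => J c / P with hν
    have hν0 : ∀ c, 0 ≤ ν c := fun c => div_nonneg (hJ c) hP0
    have hν1 : ∑ c, ν c = 1 := by
      rw [hν, ← Finset.sum_div, ← hP, div_self (ne_of_gt h0)]
    have core := core_dist m hcard ν hν0 hν1
    have hJν : ∀ c, J c = P * ν c := by
      intro c; rw [hν]; field_simp
    have hterm : ∀ c, J c * Real.logb 2 (P / J c) = P * (ν c * Real.logb 2 (ν c)⁻¹) := by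
      intro c
      rcases eq_or_lt_of_le (hJ c) with hc | hc
      · rw [← hc]
        have : ν c = 0 := by simp [hν, ← hc]
        rw [this]; ring
      · have hνc : ν c ≠ 0 := by positivity
        rw [hJν c]
        have : P / (P * ν c) = (ν c)⁻¹ := by field_simp
        rw [this]; ring
    rw [Finset.sum_congr rfl fun c _ => hterm c, ← Finset.mul_sum]
    calc P * (m:ℝ) - ((m : ℝ) + Real.logb 2 (Real.exp 1)) / 2 * (P * ∑ c, |ν c - ((2:ℝ)^m)⁻¹|)
        = P * ((m : ℝ) - ((m : ℝ) + Real.logb 2 (Real.exp 1)) / 2 * ∑ c, |ν c - ((2:ℝ)^m)⁻¹|) := by ring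
      _ ≤ P * ∑ c, ν c * Real.logb 2 (ν c)⁻¹ := mul_le_mul_of_nonneg_left core hP0

section PrLemmas
variable {Ω β β' γ : Type*} [Fintype Ω] [Fintype β] [Fintype β'] [Fintype γ]

lemma Pr_congr {μ : Ω → ℝ} {p q : Ω → Prop} (h : ∀ a, p a ↔ q a) : Pr μ p = Pr μ q := by
  unfold Pr
  refine Finset.sum_congr rfl fun a _ => ?_
  by_cases hp : p a
  · rw [if_pos hp, if_pos ((h a).1 hp)]
  · rw [if_neg hp, if_neg fun hq => hp ((h a).2 hq)]

lemma Pr_nonneg {μ : Ω → ℝ} (hμ : ∀ a, 0 ≤ μ a) (p : Ω → Prop) : 0 ≤ Pr μ p := by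
  unfold Pr
  refine Finset.sum_nonneg fun a _ => ?_
  by_cases hp : p a
  · rw [if_pos hp]; exact hμ a
  · rw [if_neg hp]

lemma Pr_le_one {μ : Ω → ℝ} (hμ : IsDist μ) (p : Ω → Prop) : Pr μ p ≤ 1 := by
  unfold Pr
  rw [← hμ.2]
  refine Finset.sum_le_sum fun a _ => ?_
  by_cases hp : p a
  · rw [if_pos hp]
  · rw [if_neg hp]; exact hμ.1 a

lemma Pr_marginal (μ : Ω → ℝ) (F : Ω → β) (h : Ω → γ) (b : β) :
    Pr μ (fun x => F x = b) = ∑ c, Pr μ (fun x => F x = b ∧ h x = c) := by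
  unfold Pr
  rw [Finset.sum_comm]
  refine Finset.sum_congr rfl fun x _ => ?_
  by_cases hF : F x = b
  · rw [if_pos hF]
    rw [Finset.sum_eq_single (h x)]
    · rw [if_pos ⟨hF, rfl⟩]
    · intro c _ hc
      exact if_neg fun hand => hc hand.2.symm
    · intro hmem; exact absurd (Finset.mem_univ _) hmem
  · rw [if_neg hF]
    refine (Finset.sum_eq_zero fun c _ => if_neg fun hand => hF hand.1).symm

lemma Pr_total {μ : Ω → ℝ} (hμ : IsDist μ) (F : Ω → β) :
    ∑ b, Pr μ (fun x => F x = b) = 1 := by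
  unfold Pr
  rw [Finset.sum_comm, ← hμ.2]
  refine Finset.sum_congr rfl fun x _ => ?_
  rw [Finset.sum_eq_single (F x)]
  · rw [if_pos rfl]
  · intro b _ hb; exact if_neg fun hx => hb hx.symm
  · intro hmem; exact absurd (Finset.mem_univ _) hmem

lemma sum_mu_comp (μ : Ω → ℝ) (F : Ω → β) (A : β → ℝ) :
    ∑ z, μ z * A (F z) = ∑ b, Pr μ (fun x => F x = b) * A b := by
  classical
  unfold Pr
  have step : ∀ b, (∑ x, if F x = b then μ x else 0) * A b
      = ∑ x, if F x = b then μ x * A b else 0 := by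
    intro b
    rw [Finset.sum_mul]
    refine Finset.sum_congr rfl fun x _ => ?_
    by_cases hF : F x = b
    · rw [if_pos hF, if_pos hF]
    · rw [if_neg hF, if_neg hF, zero_mul]
  rw [Finset.sum_congr rfl fun b _ => step b, Finset.sum_comm]
  refine Finset.sum_congr rfl fun x _ => ?_
  rw [Finset.sum_eq_single (F x)]
  · rw [if_pos rfl]
  · intro b _ hb; exact if_neg fun hx => hb hx.symm
  · intro hmem; exact absurd (Finset.mem_univ _) hmem

lemma Pr_eq_zero_of_notMem_image [DecidableEq β] {μ : Ω → ℝ} (G : Ω → β) {b : β}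
    (hb : b ∉ Finset.image G Finset.univ) : Pr μ (fun x => G x = b) = 0 := by
  unfold Pr
  refine Finset.sum_eq_zero fun x _ => if_neg fun hx => ?_
  exact hb (Finset.mem_image.mpr ⟨x, Finset.mem_univ x, hx⟩)

lemma pushH_nonneg {μ : Ω → ℝ} (hμ : IsDist μ) (f : Ω → β) : 0 ≤ pushH μ f := by
  unfold pushH
  refine Finset.sum_nonneg fun b _ => ?_
  have h0 := Pr_nonneg hμ.1 (fun x => f x = b)
  have h1 := Pr_le_one hμ (fun x => f x = b)
  rcases eq_or_lt_of_le h0 with h | h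
  · rw [← h, zero_mul]
  · refine mul_nonneg h0 (Real.logb_nonneg (by norm_num) ?_)
    rw [one_le_inv_iff₀]
    exact ⟨h, h1⟩

lemma pushH_restrict [DecidableEq β] (μ : Ω → ℝ) (G : Ω → β) :
    pushH μ G = ∑ b ∈ Finset.image G Finset.univ,
      Pr μ (fun x => G x = b) * Real.logb 2 (Pr μ (fun x => G x = b))⁻¹ := by
  unfold pushH
  refine (Finset.sum_subset (Finset.subset_univ _) fun b _ hb => ?_).symm
  rw [Pr_eq_zero_of_notMem_image G hb, zero_mul]

lemma pushH_comp (μ : Ω → ℝ) (F : Ω → β) (σ : β → β') (τ : β' → β)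
    (hτ : ∀ x, τ (σ (F x)) = F x) :
    pushH μ (fun x => σ (F x)) = pushH μ F := by
  classical
  have hinj : ∀ a₁ ∈ Finset.image F Finset.univ, ∀ a₂ ∈ Finset.image F Finset.univ,
      σ a₁ = σ a₂ → a₁ = a₂ := by
    intro a₁ h₁ a₂ h₂ hσ
    obtain ⟨x₁, _, rfl⟩ := Finset.mem_image.mp h₁
    obtain ⟨x₂, _, rfl⟩ := Finset.mem_image.mp h₂
    calc F x₁ = τ (σ (F x₁)) := (hτ x₁).symm
      _ = τ (σ (F x₂)) := by rw [hσ]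
      _ = F x₂ := hτ x₂
  rw [pushH_restrict, pushH_restrict]
  have himage : Finset.image (fun x => σ (F x)) Finset.univ
      = Finset.image σ (Finset.image F Finset.univ) := by
    rw [Finset.image_image]; rfl
  rw [himage, Finset.sum_image hinj]
  refine Finset.sum_congr rfl fun a ha => ?_
  have hev : Pr μ (fun x => σ (F x) = σ a) = Pr μ (fun x => F x = a) := by
    obtain ⟨x₀, _, rfl⟩ := Finset.mem_image.mp ha
    refine Pr_congr fun x => ⟨fun hs => ?_, fun he => by rw [he]⟩
    calc F x = τ (σ (F x)) := (hτ x).symm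
      _ = τ (σ (F x₀)) := by rw [hs]
      _ = F x₀ := hτ x₀
  rw [hev]

lemma pushH_pair (μ : Ω → ℝ) (hμ : ∀ a, 0 ≤ μ a) (F : Ω → β) (h : Ω → γ) :
    pushH μ (fun x => (F x, h x)) = pushH μ F
      + ∑ b, ∑ c, Pr μ (fun x => F x = b ∧ h x = c)
          * Real.logb 2 (Pr μ (fun x => F x = b) / Pr μ (fun x => F x = b ∧ h x = c)) := by
  unfold pushH
  rw [Fintype.sum_prod_type]
  have hsplit : ∀ (b : β) (c : γ),
      Pr μ (fun x => (F x, h x) = (b, c)) * Real.logb 2 (Pr μ (fun x => (F x, h x) = (b, c)))⁻¹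
      = Pr μ (fun x => F x = b ∧ h x = c) * Real.logb 2 (Pr μ (fun x => F x = b))⁻¹
        + Pr μ (fun x => F x = b ∧ h x = c)
          * Real.logb 2 (Pr μ (fun x => F x = b) / Pr μ (fun x => F x = b ∧ h x = c)) := by
    intro b c
    have hev : Pr μ (fun x => (F x, h x) = (b, c)) = Pr μ (fun x => F x = b ∧ h x = c) :=
      Pr_congr fun x => by rw [Prod.mk.injEq]
    rw [hev]
    set J := Pr μ (fun x => F x = b ∧ h x = c) with hJdef
    set P := Pr μ (fun x => F x = b) with hPdef
    have hJ0 : 0 ≤ J := Pr_nonneg hμ _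
    rcases eq_or_lt_of_le hJ0 with h0 | h0
    · rw [← h0]; ring
    · have hJP : J ≤ P := by
        rw [hPdef, Pr_marginal μ F h b]
        exact Finset.single_le_sum (f := fun c => Pr μ (fun x => F x = b ∧ h x = c))
          (fun i _ => Pr_nonneg hμ _) (Finset.mem_univ c)
      have hP0 : 0 < P := lt_of_lt_of_le h0 hJP
      have hinv : (J : ℝ)⁻¹ = P⁻¹ * (P / J) := by field_simp
      rw [hinv, Real.logb_mul (by positivity) (by positivity)]
      ring
  rw [Finset.sum_congr rfl fun b _ => Finset.sum_congr rfl fun c _ => hsplit b c]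
  rw [Finset.sum_congr rfl fun b _ => (Finset.sum_add_distrib :
    ∑ c, ((Pr μ fun x => F x = b ∧ h x = c) * Real.logb 2 (Pr μ fun x => F x = b)⁻¹
      + (Pr μ fun x => F x = b ∧ h x = c)
        * Real.logb 2 ((Pr μ fun x => F x = b) / Pr μ fun x => F x = b ∧ h x = c)) = _)]
  rw [Finset.sum_add_distrib]
  congr 1
  refine Finset.sum_congr rfl fun b _ => ?_
  rw [← Finset.sum_mul, ← Pr_marginal μ F h b]

end PrLemmas

noncomputable def errTerm {Ω : Type*} [Fintype Ω] {D r : ℕ}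
    (μ : Ω → ℝ) (g : Ω → Fin D → (Fin r → Bool)) (s : Fin D) : ℝ :=
  ∑ z, μ z *
    ∑ y : Fin r → Bool,
      |Pr μ (fun x => g x s = y ∧ ∀ t, t < s → g x t = g z t)
          / Pr μ (fun x => ∀ t, t < s → g x t = g z t)
        - ((2 : ℝ) ^ r)⁻¹|

noncomputable def errTermNat {Ω : Type*} [Fintype Ω] {D r : ℕ}
    (μ : Ω → ℝ) (g : Ω → Fin D → (Fin r → Bool)) (j : ℕ) : ℝ :=
  if hj : j < D then errTerm μ g ⟨j, hj⟩ else 0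

def prefixMap {n m D : ℕ} (g : (Fin n → Bool) → Fin D → (Fin m → Bool)) (k : ℕ) :
    (Fin n → Bool) → Fin D → (Fin m → Bool) :=
  fun x t => if t.val < k then g x t else fun _ => false

lemma step_bound {n m D : ℕ} (μ : (Fin n → Bool) → ℝ) (hμ : IsDist μ)
    (g : (Fin n → Bool) → Fin D → (Fin m → Bool)) (s : Fin D) :
    pushH μ (prefixMap g s.val) + (m : ℝ)
      - ((m : ℝ) + Real.logb 2 (Real.exp 1)) / 2 * errTerm μ g s
      ≤ pushH μ (prefixMap g (s.val + 1)) := by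
  classical
  set F : (Fin n → Bool) → (Fin D → Fin m → Bool) := prefixMap g s.val with hFdef
  set hfun : (Fin n → Bool) → (Fin m → Bool) := fun x => g x s with hhdef
  -- Step 1: pushH of (s+1)-prefix equals pushH of the pair (s-prefix, g · s)
  have hcomp : pushH μ (fun x => (F x, hfun x)) = pushH μ (prefixMap g (s.val + 1)) := by
    set σ : (Fin D → Fin m → Bool) → (Fin D → Fin m → Bool) × (Fin m → Bool) :=
      fun b => (fun t => if t.val < s.val then b t else fun _ => false, b s) with hσ
    set τ : (Fin D → Fin m → Bool) × (Fin m → Bool) → (Fin D → Fin m → Bool) :=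
      fun p => fun t => if t.val = s.val then p.2 else p.1 t with hτdef
    have hτ : ∀ x, τ (σ (prefixMap g (s.val + 1) x)) = prefixMap g (s.val + 1) x := by
      intro x
      funext t
      show (if t.val = s.val then prefixMap g (s.val + 1) x s
          else if t.val < s.val then prefixMap g (s.val + 1) x t else fun _ => false)
        = prefixMap g (s.val + 1) x t
      simp only [prefixMap]
      by_cases h1 : t.val = s.val
      · rw [if_pos h1, if_pos (by omega), if_pos (by omega)]
        have ht : t = s := Fin.ext h1
        rw [ht]
      · rw [if_neg h1]
        by_cases h2 : t.val < s.val
        · rw [if_pos h2, if_pos (by omega)]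
        · rw [if_neg h2, if_neg (by omega)]
    have e1 : (fun x => σ (prefixMap g (s.val + 1) x)) = fun x => (F x, hfun x) := by
      funext x
      refine Prod.ext ?_ ?_
      · show (fun t => if t.val < s.val then prefixMap g (s.val + 1) x t else fun _ => false)
          = prefixMap g s.val x
        funext t
        simp only [prefixMap]
        by_cases h1 : t.val < s.val
        · rw [if_pos h1, if_pos (by omega), if_pos h1]
        · rw [if_neg h1, if_neg h1]
      · show prefixMap g (s.val + 1) x s = g x s
        simp only [prefixMap]
        rw [if_pos (by omega)]
    rw [← e1]
    exact pushH_comp μ (prefixMap g (s.val + 1)) σ τ hτ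
  -- Step 2: chain rule
  have hchain := pushH_pair μ hμ.1 F hfun
  -- Step 3: per-prefix lower bound
  set C : ℝ := (m : ℝ) + Real.logb 2 (Real.exp 1) with hCdef
  set A : (Fin D → Fin m → Bool) → ℝ := fun b =>
    ∑ c, |Pr μ (fun x => F x = b ∧ hfun x = c) / Pr μ (fun x => F x = b) - ((2:ℝ)^m)⁻¹|
    with hAdef
  have hlow : ∀ b, (Pr μ fun x => F x = b) * m - C / 2 * ((Pr μ fun x => F x = b) * A b)
      ≤ ∑ c, Pr μ (fun x => F x = b ∧ hfun x = c)
          * Real.logb 2 ((Pr μ fun x => F x = b) / Pr μ (fun x => F x = b ∧ hfun x = c)) := by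
    intro b
    have hcard : Fintype.card (Fin m → Bool) = 2 ^ m := by simp
    have hp := per_prefix m hcard (fun c => Pr μ (fun x => F x = b ∧ hfun x = c))
      (fun c => Pr_nonneg hμ.1 _)
    rwa [← Pr_marginal μ F hfun b] at hp
  have hsum : (∑ b, (Pr μ fun x => F x = b) * (m : ℝ))
      - C / 2 * ∑ b, (Pr μ fun x => F x = b) * A b
      ≤ ∑ b, ∑ c, Pr μ (fun x => F x = b ∧ hfun x = c)
          * Real.logb 2 ((Pr μ fun x => F x = b) / Pr μ (fun x => F x = b ∧ hfun x = c)) := by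
    rw [Finset.mul_sum, ← Finset.sum_sub_distrib]
    exact Finset.sum_le_sum fun b _ => hlow b
  have hsum1 : ∑ b, (Pr μ fun x => F x = b) * (m : ℝ) = (m : ℝ) := by
    rw [← Finset.sum_mul, Pr_total hμ F, one_mul]
  -- Step 4: identify the error sum
  have herr : ∑ b, (Pr μ fun x => F x = b) * A b = errTerm μ g s := by
    rw [← sum_mu_comp μ F A]
    unfold errTerm
    refine Finset.sum_congr rfl fun z _ => ?_
    congr 1
    refine Finset.sum_congr rfl fun y _ => ?_
    have he1 : Pr μ (fun x => F x = F z ∧ hfun x = y)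
        = Pr μ (fun x => g x s = y ∧ ∀ t, t < s → g x t = g z t) := by
      refine Pr_congr fun x => ?_
      constructor
      · rintro ⟨h1, h2⟩
        refine ⟨h2, fun t ht => ?_⟩
        have ht' : t.val < s.val := ht
        have h3 := congrFun h1 t
        simp only [hFdef, prefixMap] at h3
        rwa [if_pos ht', if_pos ht'] at h3
      · rintro ⟨h1, h2⟩
        refine ⟨?_, h1⟩
        funext t
        simp only [hFdef, prefixMap]
        by_cases ht : t.val < s.val
        · rw [if_pos ht, if_pos ht]
          exact h2 t ht
        · rw [if_neg ht, if_neg ht]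
    have he2 : Pr μ (fun x => F x = F z)
        = Pr μ (fun x => ∀ t, t < s → g x t = g z t) := by
      refine Pr_congr fun x => ?_
      constructor
      · intro h1 t ht
        have ht' : t.val < s.val := ht
        have h3 := congrFun h1 t
        simp only [hFdef, prefixMap] at h3
        rwa [if_pos ht', if_pos ht'] at h3
      · intro h2
        funext t
        simp only [hFdef, prefixMap]
        by_cases ht : t.val < s.val
        · rw [if_pos ht, if_pos ht]
          exact h2 t ht
        · rw [if_neg ht, if_neg ht]
    rw [he1, he2]
  rw [← hcomp, hchain]
  rw [hsum1] at hsum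
  rw [herr] at hsum
  linarith [hsum]

lemma step_bound_nat {n m D : ℕ} (μ : (Fin n → Bool) → ℝ) (hμ : IsDist μ)
    (g : (Fin n → Bool) → Fin D → (Fin m → Bool)) (k : ℕ) (hkD : k < D) :
    pushH μ (prefixMap g k) + (m : ℝ)
      - ((m : ℝ) + Real.logb 2 (Real.exp 1)) / 2 * errTermNat μ g k
      ≤ pushH μ (prefixMap g (k + 1)) := by
  have h := step_bound μ hμ g ⟨k, hkD⟩
  simp only [errTermNat]
  rw [dif_pos hkD]
  exact h

lemma telescope {n m D : ℕ} (μ : (Fin n → Bool) → ℝ) (hμ : IsDist μ)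
    (g : (Fin n → Bool) → Fin D → (Fin m → Bool)) :
    ∀ k, k ≤ D → (k : ℝ) * m
      - ((m : ℝ) + Real.logb 2 (Real.exp 1)) / 2 * ∑ j ∈ Finset.range k, errTermNat μ g j
      ≤ pushH μ (prefixMap g k) := by
  intro k
  induction k with
  | zero => intro _; simpa using pushH_nonneg hμ (prefixMap g 0)
  | succ k ih =>
    intro hk
    have hkD : k < D := hk
    have h1 := ih (le_of_lt hkD)
    have h2 := step_bound_nat μ hμ g k hkD
    rw [Finset.sum_range_succ]
    push_cast
    linarith

/-- Very strong extractors yield deterministic entropy condensers: if `g` is a very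
strong `δ`-extractor for `F` (error at most `2δ` on every `μ ∈ F`), then
`H(g(X,1),…,g(X,D)) ≥ D·m − D·m·δ − D·sqrt(4·log₂e·m·δ)` for `X ∼ μ`, every `μ ∈ F`. -/
theorem very_strong_extractor_to_condenser {n m D : ℕ} (hD : 0 < D)
    (δ : ℝ) (hδ0 : 0 ≤ δ) (hδ1 : δ ≤ 1)
    (F : Set ((Fin n → Bool) → ℝ)) (hF : ∀ μ ∈ F, IsDist μ)
    (g : (Fin n → Bool) → Fin D → (Fin m → Bool))
    (hvs : ∀ μ ∈ F, vsErr μ g ≤ 2 * δ) :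
    ∀ μ ∈ F,
      (D : ℝ) * m - D * m * δ - D * Real.sqrt (4 * Real.logb 2 (Real.exp 1) * m * δ)
        ≤ pushH μ g := by
  intro μ hμF
  have hμ := hF μ hμF
  have hErr := hvs μ hμF
  have hL0 : 0 < Real.logb 2 (Real.exp 1) := by
    rw [Real.logb, Real.log_exp]
    have := Real.log_two_gt_d9
    positivity
  have hL2 : Real.logb 2 (Real.exp 1) ≤ 2 := by
    rw [Real.logb, Real.log_exp]
    rw [div_le_iff₀ (Real.log_pos one_lt_two)]
    nlinarith [Real.log_two_gt_d9]
  set L := Real.logb 2 (Real.exp 1) with hLdef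
  rcases Nat.eq_zero_or_pos m with hm0 | hm1
  · subst hm0
    have h0 := pushH_nonneg hμ g
    norm_num
    exact h0
  · -- main case
    have tel := telescope μ hμ g D le_rfl
    have hgD : prefixMap g D = g := by
      funext x t
      simp only [prefixMap]
      rw [if_pos t.isLt]
    rw [hgD] at tel
    have hsum : ∑ j ∈ Finset.range D, errTermNat μ g j = ∑ s : Fin D, errTerm μ g s := by
      rw [← Fin.sum_univ_eq_sum_range (fun j => errTermNat μ g j) D]
      refine Finset.sum_congr rfl fun s _ => ?_
      simp only [errTermNat]
      rw [dif_pos s.isLt]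
    have hvs2 : ∑ s : Fin D, errTerm μ g s ≤ 2 * δ * D := by
      have heq : vsErr μ g = (D:ℝ)⁻¹ * ∑ s : Fin D, errTerm μ g s := rfl
      rw [heq] at hErr
      have hD0 : (0:ℝ) < D := by exact_mod_cast hD
      calc ∑ s : Fin D, errTerm μ g s = D * ((D:ℝ)⁻¹ * ∑ s : Fin D, errTerm μ g s) := by
            field_simp
        _ ≤ D * (2*δ) := mul_le_mul_of_nonneg_left hErr hD0.le
        _ = 2*δ*D := by ring
    rw [hsum] at tel
    have key : (D:ℝ)*m - ((m:ℝ)+L)*δ*D ≤ pushH μ g := by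
      have hmul := mul_le_mul_of_nonneg_left hvs2
        (by positivity : (0:ℝ) ≤ ((m:ℝ)+L)/2)
      linarith
    have hm1' : (1:ℝ) ≤ m := by exact_mod_cast hm1
    have hLd0 : 0 ≤ L * δ := mul_nonneg hL0.le hδ0
    have hs : L * δ ≤ Real.sqrt (4 * L * m * δ) := by
      rw [Real.le_sqrt hLd0 (by positivity)]
      have h4 : L * δ ≤ 4 * (m:ℝ) := by nlinarith
      nlinarith [mul_le_mul_of_nonneg_left h4 hLd0]
    have hDpos : (0:ℝ) ≤ D := Nat.cast_nonneg D
    have hs2 := mul_le_mul_of_nonneg_left hs hDpos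
    linarith
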